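/- The characteristic polynomials of the non-crossing partition lattices satisfy the recurrence χ(NC_n,t) = t·χ(NC_{n−1},t) − Σ_{i=1}^{n−1} χ(NC_i,t)·χ(NC_{n−i},t), with χ(NC_1,t) = 1. -/

import Mathlib

/-- A partition (equivalence relation) of `Fin n` is non-crossing if there are no
`i < j < k < l` with `i ∼ k`, `j ∼ l` but `i ≁ j`. -/
def Noncrossing {n : ℕ} (s : Setoid (Fin n)) : Prop :=
  ¬ ∃ i j k l : Fin n, i < j ∧ j < k ∧ k < l ∧ s.r i k ∧ s.r j l ∧ ¬ s.r i j

/-- The lattice `NC n` of non-crossing partitions of `{1,…,n}` (modelled on `Fin n`),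
ordered by refinement (the order inherited from the lattice of all partitions). -/
def NC (n : ℕ) := {s : Setoid (Fin n) // Noncrossing s}

instance (n : ℕ) : PartialOrder (NC n) :=
  inferInstanceAs (PartialOrder {s : Setoid (Fin n) // Noncrossing s})

/-- The partition of `{1,…,n}` whose only non-singleton block is `{1,…,n−1}`
(in `Fin n`: the block of all elements with value `< n - 1`). -/
def ncPiRel (n : ℕ) : Setoid (Fin n) :=
  ⟨fun i j => (i : ℕ) = j ∨ ((i : ℕ) < n - 1 ∧ (j : ℕ) < n - 1),
   ⟨fun i => Or.inl rfl, fun h => by omega, fun h1 h2 => by omega⟩⟩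

theorem ncPiRel_noncrossing (n : ℕ) : Noncrossing (ncPiRel n) := by
  rintro ⟨i, j, k, l, hij, hjk, hkl, hik, hjl, hnij⟩
  simp only [Fin.lt_def] at hij hjk hkl
  have hik : (i : ℕ) = k ∨ ((i : ℕ) < n - 1 ∧ (k : ℕ) < n - 1) := hik
  have hjl : (j : ℕ) = l ∨ ((j : ℕ) < n - 1 ∧ (l : ℕ) < n - 1) := hjl
  have hnij : ¬ ((i : ℕ) = j ∨ ((i : ℕ) < n - 1 ∧ (j : ℕ) < n - 1)) := hnij
  omega

/-- `π = 12⋯(n−1)` as an element of `NC n`. -/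
def ncPi (n : ℕ) : NC n := ⟨ncPiRel n, ncPiRel_noncrossing n⟩

/-- The discrete partition (all blocks singletons), the bottom element of `NC n`. -/
def ncBot (n : ℕ) : NC n :=
  ⟨⟨fun i j => i = j, ⟨fun _ => rfl, fun h => h.symm, fun h1 h2 => h1.trans h2⟩⟩,
   by
    rintro ⟨i, j, k, l, hij, hjk, hkl, hik, hjl, hnij⟩
    exact absurd (hik ▸ hij.trans hjk) (lt_irrefl _)⟩

/-- The number of blocks of a non-crossing partition. -/
noncomputable def ncBlocks {n : ℕ} (p : NC n) : ℕ := Nat.card (Quotient p.1)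

open Polynomial in
/-- The characteristic polynomial `χ(NC_n, t) = Σ_{π ∈ NC_n} μ(⊥,π) t^{(n−1)−ρ(π)}`
of the non-crossing partition lattice, where the rank is
`ρ(π) = n − (number of blocks of π)` and `mu` is the Möbius function. -/
noncomputable def ncChi (mu : ∀ k, NC k → NC k → ℤ) [∀ k, Fintype (NC k)]
    (k : ℕ) : Polynomial ℤ :=
  ∑ p : NC k, C (mu k (ncBot k) p) * X ^ ((k - 1) - (k - ncBlocks p))

/-! ### natural-number valued relation -/

def SRelP {k : ℕ} (σ : NC k) (a b : ℕ) : Prop :=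
  ∃ (ha : a < k) (hb : b < k), σ.1.r ⟨a, ha⟩ ⟨b, hb⟩

lemma SRelP.lt_left {k} {σ : NC k} {a b} (h : SRelP σ a b) : a < k := h.1
lemma SRelP.lt_right {k} {σ : NC k} {a b} (h : SRelP σ a b) : b < k := h.2.1

lemma srelP_refl {k} (σ : NC k) {a : ℕ} (ha : a < k) : SRelP σ a a :=
  ⟨ha, ha, σ.1.refl _⟩

lemma SRelP.symm {k} {σ : NC k} {a b} (h : SRelP σ a b) : SRelP σ b a := by
  obtain ⟨ha, hb, h⟩ := h; exact ⟨hb, ha, σ.1.symm h⟩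

lemma SRelP.trans {k} {σ : NC k} {a b c} (h : SRelP σ a b) (h' : SRelP σ b c) :
    SRelP σ a c := by
  obtain ⟨ha, hb, h⟩ := h; obtain ⟨hb', hc, h'⟩ := h'
  exact ⟨ha, hc, σ.1.trans h (by convert h' using 2)⟩

lemma srelP_coe {k} (σ : NC k) (x y : Fin k) :
    SRelP σ (x : ℕ) (y : ℕ) ↔ σ.1.r x y := by
  constructor
  · rintro ⟨hx, hy, h⟩; convert h <;> exact (Fin.ext rfl)
  · intro h; exact ⟨x.2, y.2, h⟩

lemma NC.le_iff {k} {σ τ : NC k} : σ ≤ τ ↔ ∀ a b, SRelP σ a b → SRelP τ a b := by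
  constructor
  · intro h a b ⟨ha, hb, hr⟩
    exact ⟨ha, hb, Setoid.le_def.mp h hr⟩
  · intro h
    show σ.1 ≤ τ.1
    rw [Setoid.le_def]
    intro x y hxy
    have := h x y ((srelP_coe σ x y).mpr hxy)
    exact (srelP_coe τ x y).mp this

lemma ncBot_le {k} (σ : NC k) : ncBot k ≤ σ := by
  rw [NC.le_iff]
  rintro a b ⟨ha, hb, h⟩
  have : a = b := by simpa [ncBot] using congrArg Fin.val h
  subst this
  exact srelP_refl σ ha

lemma srelP_bot {k} {a b : ℕ} : SRelP (ncBot k) a b ↔ a = b ∧ a < k := by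
  constructor
  · rintro ⟨ha, hb, h⟩
    exact ⟨by simpa [ncBot] using congrArg Fin.val h, ha⟩
  · rintro ⟨rfl, ha⟩; exact srelP_refl _ ha

lemma nc_ext {k} {σ τ : NC k} (h : ∀ a b : ℕ, SRelP σ a b ↔ SRelP τ a b) : σ = τ := by
  apply Subtype.ext
  apply Setoid.ext
  intro x y
  rw [← srelP_coe σ x y, ← srelP_coe τ x y]
  exact h x y

/-- the noncrossing property, in `SRelP` form. -/
lemma nc_noncross {k} (σ : NC k) {a b e f : ℕ} (hab : a < b) (hbe : b < e) (hef : e < f)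
    (h1 : SRelP σ a e) (h2 : SRelP σ b f) : SRelP σ a b := by
  by_contra hn
  obtain ⟨ha, he, hae⟩ := h1
  obtain ⟨hb, hf, hbf⟩ := h2
  exact σ.2 ⟨⟨a, ha⟩, ⟨b, hb⟩, ⟨e, he⟩, ⟨f, hf⟩, by simpa [Fin.lt_def], by simpa [Fin.lt_def],
    by simpa [Fin.lt_def], hae, hbf, fun hc => hn ⟨ha, hb, hc⟩⟩
open Finset
open scoped Classical
section
variable {α : Type*} [PartialOrder α] [Fintype α] [DecidableEq α]

/-- uniqueness of functions satisfying the Möbius defining identity -/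
lemma mobius_unique [WellFoundedLT α]
    (f g : α → ℤ) (e : α → ℤ) (b : α)
    (hf : ∀ b' ≤ b, (∑ c ∈ univ.filter (fun c => c ≤ b'), f c) = e b')
    (hg : ∀ b' ≤ b, (∑ c ∈ univ.filter (fun c => c ≤ b'), g c) = e b') :
    ∀ b' ≤ b, f b' = g b' := by
  classical
  intro b' hb'
  induction b' using WellFoundedLT.induction with
  | ind b' IH =>
  have key : ∀ h : α → ℤ, (∑ c ∈ univ.filter (fun c => c ≤ b'), h c) =
      h b' + ∑ c ∈ univ.filter (fun c => c < b'), h c := by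
    intro h
    have : univ.filter (fun c => c ≤ b') = insert b' (univ.filter (fun c => c < b')) := by
      ext c; simp [le_iff_lt_or_eq, or_comm, eq_comm (a := c)]
    rw [this, sum_insert (by simp)]
  have hsum : ∑ c ∈ univ.filter (fun c => c < b'), f c
      = ∑ c ∈ univ.filter (fun c => c < b'), g c := by
    apply sum_congr rfl
    intro c hc
    simp only [mem_filter] at hc
    exact IH c hc.2 (le_trans hc.2.le hb')
  have h1 := hf b' hb'
  have h2 := hg b' hb'
  rw [key] at h1 h2
  omega

end

/-! ### ncTop -/

def ncTop (k : ℕ) : NC k :=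
  ⟨⟨fun _ _ => True, ⟨fun _ => trivial, fun _ => trivial, fun _ _ => trivial⟩⟩,
   by rintro ⟨i, j, k', l, _, _, _, _, _, hn⟩; exact hn trivial⟩

lemma srelP_top {k} {a b : ℕ} : SRelP (ncTop k) a b ↔ a < k ∧ b < k := by
  constructor
  · rintro ⟨ha, hb, -⟩; exact ⟨ha, hb⟩
  · rintro ⟨ha, hb⟩; exact ⟨ha, hb, trivial⟩

lemma le_ncTop {k} (σ : NC k) : σ ≤ ncTop k := by
  rw [NC.le_iff]; rintro a b ⟨ha, hb, -⟩; exact ⟨ha, hb, trivial⟩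

/-! ### glue -/

def oidx (c s x : ℕ) : ℕ := if x < c then x else x - s
def olift (c s i : ℕ) : ℕ := if i < c then i else i + s

lemma oidx_lt {c s u m : ℕ} (h1 : c ≤ u) (h2 : m = s + u) {x : ℕ} (hx : x < m)
    (hout : x < c ∨ c + s ≤ x) : oidx c s x < u := by
  unfold oidx; split <;> omega

lemma oidx_strictMonoOn {c s : ℕ} {x y : ℕ} (hx : x < c ∨ c + s ≤ x)
    (hy : y < c ∨ c + s ≤ y) (hxy : x < y) : oidx c s x < oidx c s y := by
  unfold oidx; split <;> split <;> omega

lemma olift_lt {c s u m : ℕ} (h1 : c ≤ u) (h2 : m = s + u) {i : ℕ} (hi : i < u) :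
    olift c s i < m := by
  unfold olift; split <;> omega

lemma olift_out {c s : ℕ} (i : ℕ) (hi : c ≤ i → c + s ≤ i + s) :
    olift c s i < c ∨ c + s ≤ olift c s i := by
  unfold olift; split <;> omega

lemma oidx_olift {c s i : ℕ} : oidx c s (olift c s i) = i := by
  unfold oidx olift; split_ifs <;> omega

lemma olift_oidx {c s x : ℕ} (hout : x < c ∨ c + s ≤ x) : olift c s (oidx c s x) = x := by
  unfold oidx olift; split_ifs <;> omega

lemma olift_strictMono {c s : ℕ} {i j : ℕ} (hij : i < j) : olift c s i < olift c s j := by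
  unfold olift; split <;> split <;> omega

def ncGlue (c : ℕ) {s u m : ℕ} (h1 : c ≤ u) (h2 : m = s + u)
    (τ : NC s) (γ : NC u) : NC m := by
  refine ⟨⟨fun x y =>
    (c ≤ (x : ℕ) ∧ c ≤ (y : ℕ) ∧ SRelP τ ((x : ℕ) - c) ((y : ℕ) - c)) ∨
    (((x : ℕ) < c ∨ c + s ≤ (x : ℕ)) ∧ ((y : ℕ) < c ∨ c + s ≤ (y : ℕ)) ∧
      SRelP γ (oidx c s (x : ℕ)) (oidx c s (y : ℕ))), ?_, ?_, ?_⟩, ?_⟩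
  · -- refl
    intro x
    by_cases hx : c ≤ (x : ℕ) ∧ (x : ℕ) < c + s
    · exact Or.inl ⟨hx.1, hx.1, srelP_refl τ (by omega)⟩
    · have hout : (x : ℕ) < c ∨ c + s ≤ (x : ℕ) := by omega
      exact Or.inr ⟨hout, hout, srelP_refl γ (oidx_lt h1 h2 x.2 hout)⟩
  · -- symm
    rintro x y (⟨h1', h2', h3⟩ | ⟨h1', h2', h3⟩)
    · exact Or.inl ⟨h2', h1', h3.symm⟩
    · exact Or.inr ⟨h2', h1', h3.symm⟩
  · -- trans
    rintro x y z (⟨ha, hb, hr⟩ | ⟨ha, hb, hr⟩) (⟨ha', hb', hr'⟩ | ⟨ha', hb', hr'⟩)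
    · exact Or.inl ⟨ha, hb', hr.trans hr'⟩
    · exfalso; have := hr.lt_right; omega
    · exfalso; have := hr'.lt_left; have := hr.lt_right; omega
    · exact Or.inr ⟨ha, hb', hr.trans hr'⟩
  · -- noncrossing
    rintro ⟨i, j, k, l, hij, hjk, hkl, hik, hjl, hnij⟩
    rw [Fin.lt_def] at hij hjk hkl
    rcases hik with ⟨hi, hk, hik⟩ | ⟨hi, hk, hik⟩
    · have hikb := hik.lt_left; have hikb' := hik.lt_right
      rcases hjl with ⟨hj, hl, hjl⟩ | ⟨hj, hl, hjl⟩
      · have hjlb := hjl.lt_left; have hjlb' := hjl.lt_right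
        refine hnij (Or.inl ⟨hi, hj, ?_⟩)
        exact nc_noncross τ (by omega) (by omega) (by omega) hik hjl
      · exfalso; omega
    · rcases hjl with ⟨hj, hl, hjl⟩ | ⟨hj, hl, hjl⟩
      · have hjlb := hjl.lt_left; have hjlb' := hjl.lt_right
        exfalso
        rcases hk with h | h <;> omega
      · refine hnij (Or.inr ⟨hi, hj, ?_⟩)
        exact nc_noncross γ (oidx_strictMonoOn hi hj hij) (oidx_strictMonoOn hj hk hjk)
          (oidx_strictMonoOn hk hl hkl) hik hjl

lemma glue_srelP {c s u m : ℕ} (h1 : c ≤ u) (h2 : m = s + u) (τ : NC s) (γ : NC u)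
    {a b : ℕ} :
    SRelP (ncGlue c h1 h2 τ γ) a b ↔
      (a < m ∧ b < m) ∧
      ((c ≤ a ∧ c ≤ b ∧ SRelP τ (a - c) (b - c)) ∨
       ((a < c ∨ c + s ≤ a) ∧ (b < c ∨ c + s ≤ b) ∧ SRelP γ (oidx c s a) (oidx c s b))) := by
  constructor
  · rintro ⟨ha, hb, h⟩
    exact ⟨⟨ha, hb⟩, h⟩
  · rintro ⟨⟨ha, hb⟩, h⟩
    exact ⟨ha, hb, h⟩

lemma mid_srelP {c s u m : ℕ} (h1 : c ≤ u) (h2 : m = s + u) (τ : NC s) (γ : NC u)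
    {i j : ℕ} (h : SRelP τ i j) :
    SRelP (ncGlue c h1 h2 τ γ) (c + i) (c + j) := by
  have hi := h.lt_left; have hj := h.lt_right
  rw [glue_srelP]
  refine ⟨⟨by omega, by omega⟩, Or.inl ⟨by omega, by omega, ?_⟩⟩
  simpa using h

lemma out_srelP {c s u m : ℕ} (h1 : c ≤ u) (h2 : m = s + u) (τ : NC s) (γ : NC u)
    {i j : ℕ} (h : SRelP γ i j) :
    SRelP (ncGlue c h1 h2 τ γ) (olift c s i) (olift c s j) := by
  have hi := h.lt_left; have hj := h.lt_right
  rw [glue_srelP]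
  refine ⟨⟨olift_lt h1 h2 hi, olift_lt h1 h2 hj⟩,
    Or.inr ⟨olift_out _ (by omega), olift_out _ (by omega), ?_⟩⟩
  rwa [oidx_olift, oidx_olift]

/-! ### restrictions -/

def ncRmid (c s : ℕ) {m : ℕ} (h : c + s ≤ m) (σ : NC m) : NC s := by
  refine ⟨⟨fun i j => SRelP σ (c + i) (c + j), ?_, ?_, ?_⟩, ?_⟩
  · intro i; exact srelP_refl σ (by omega)
  · intro i j h'; exact h'.symm
  · intro i j k h1 h2; exact h1.trans h2
  · rintro ⟨i, j, k, l, hij, hjk, hkl, hik, hjl, hnij⟩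
    rw [Fin.lt_def] at hij hjk hkl
    exact hnij (nc_noncross σ (by omega) (by omega) (by omega) hik hjl)

def ncRout (c s u : ℕ) {m : ℕ} (h1 : c ≤ u) (h2 : m = s + u) (σ : NC m) : NC u := by
  refine ⟨⟨fun i j => SRelP σ (olift c s i) (olift c s j), ?_, ?_, ?_⟩, ?_⟩
  · intro i; exact srelP_refl σ (olift_lt h1 h2 i.2)
  · intro i j h'; exact h'.symm
  · intro i j k ha hb; exact ha.trans hb
  · rintro ⟨i, j, k, l, hij, hjk, hkl, hik, hjl, hnij⟩
    rw [Fin.lt_def] at hij hjk hkl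
    exact hnij (nc_noncross σ (olift_strictMono hij) (olift_strictMono hjk)
      (olift_strictMono hkl) hik hjl)

lemma rmid_srelP {c s m : ℕ} (h : c + s ≤ m) (σ : NC m) {i j : ℕ} :
    SRelP (ncRmid c s h σ) i j ↔ i < s ∧ j < s ∧ SRelP σ (c + i) (c + j) := by
  constructor
  · rintro ⟨hi, hj, hr⟩; exact ⟨hi, hj, hr⟩
  · rintro ⟨hi, hj, hr⟩; exact ⟨hi, hj, hr⟩

lemma rout_srelP {c s u m : ℕ} (h1 : c ≤ u) (h2 : m = s + u) (σ : NC m) {i j : ℕ} :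
    SRelP (ncRout c s u h1 h2 σ) i j ↔
      i < u ∧ j < u ∧ SRelP σ (olift c s i) (olift c s j) := by
  constructor
  · rintro ⟨hi, hj, hr⟩; exact ⟨hi, hj, hr⟩
  · rintro ⟨hi, hj, hr⟩; exact ⟨hi, hj, hr⟩

lemma rmid_glue {c s u m : ℕ} (h1 : c ≤ u) (h2 : m = s + u) (hcs : c + s ≤ m)
    (τ : NC s) (γ : NC u) : ncRmid c s hcs (ncGlue c h1 h2 τ γ) = τ := by
  apply nc_ext
  intro a b
  rw [rmid_srelP, glue_srelP]
  constructor
  · rintro ⟨ha, hb, -, ⟨-, -, hr⟩ | ⟨hout, -, -⟩⟩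
    · simpa using hr
    · omega
  · intro h
    have ha := h.lt_left; have hb := h.lt_right
    exact ⟨ha, hb, ⟨by omega, by omega⟩, Or.inl ⟨by omega, by omega, by simpa using h⟩⟩

lemma rout_glue {c s u m : ℕ} (h1 : c ≤ u) (h2 : m = s + u)
    (τ : NC s) (γ : NC u) : ncRout c s u h1 h2 (ncGlue c h1 h2 τ γ) = γ := by
  apply nc_ext
  intro a b
  rw [rout_srelP, glue_srelP]
  constructor
  · rintro ⟨ha, hb, -, ⟨hma, -, hr⟩ | ⟨-, -, hr⟩⟩
    · exfalso
      have hla : olift c s a < c ∨ c + s ≤ olift c s a := olift_out _ (by omega)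
      have := hr.lt_left
      omega
    · rwa [oidx_olift, oidx_olift] at hr
  · intro h
    have ha := h.lt_left; have hb := h.lt_right
    refine ⟨ha, hb, ⟨olift_lt h1 h2 ha, olift_lt h1 h2 hb⟩,
      Or.inr ⟨olift_out _ (by omega), olift_out _ (by omega), ?_⟩⟩
    rwa [oidx_olift, oidx_olift]

/-- if `σ` has no mid-out relations, it is the glue of its restrictions. -/
lemma glue_eq_self {c s u m : ℕ} (h1 : c ≤ u) (h2 : m = s + u) (hcs : c + s ≤ m) (σ : NC m)
    (hsep : ∀ a b, c ≤ a → a < c + s → SRelP σ a b → c ≤ b ∧ b < c + s) :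
    ncGlue c h1 h2 (ncRmid c s hcs σ) (ncRout c s u h1 h2 σ) = σ := by
  apply nc_ext
  intro a b
  rw [glue_srelP]
  constructor
  · rintro ⟨⟨ha, hb⟩, ⟨hca, hcb, hr⟩ | ⟨houta, houtb, hr⟩⟩
    · rw [rmid_srelP] at hr
      obtain ⟨-, -, hr⟩ := hr
      have : c + (a - c) = a := by omega
      rw [this] at hr
      have : c + (b - c) = b := by omega
      rwa [this] at hr
    · rw [rout_srelP] at hr
      obtain ⟨-, -, hr⟩ := hr
      rwa [olift_oidx houta, olift_oidx houtb] at hr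
  · intro h
    have ha := h.lt_left; have hb := h.lt_right
    refine ⟨⟨ha, hb⟩, ?_⟩
    by_cases hmid : c ≤ a ∧ a < c + s
    · have hbmid := hsep a b hmid.1 hmid.2 h
      refine Or.inl ⟨hmid.1, hbmid.1, ?_⟩
      rw [rmid_srelP]
      refine ⟨by omega, by omega, ?_⟩
      have e1 : c + (a - c) = a := by omega
      have e2 : c + (b - c) = b := by omega
      rw [e1, e2]; exact h
    · have houta : a < c ∨ c + s ≤ a := by omega
      have houtb : b < c ∨ c + s ≤ b := by
        by_contra hc
        have hbmid : c ≤ b ∧ b < c + s := by omega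
        have := hsep b a hbmid.1 hbmid.2 h.symm
        omega
      refine Or.inr ⟨houta, houtb, ?_⟩
      rw [rout_srelP]
      refine ⟨oidx_lt h1 h2 ha houta, oidx_lt h1 h2 hb houtb, ?_⟩
      rwa [olift_oidx houta, olift_oidx houtb]

lemma glue_le_glue_iff {c s u m : ℕ} (h1 : c ≤ u) (h2 : m = s + u)
    {τ τ' : NC s} {γ γ' : NC u} :
    ncGlue c h1 h2 τ γ ≤ ncGlue c h1 h2 τ' γ' ↔ τ ≤ τ' ∧ γ ≤ γ' := by
  constructor
  · intro h
    rw [NC.le_iff] at h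
    constructor
    · rw [NC.le_iff]
      intro a b hab
      have := h _ _ (mid_srelP h1 h2 τ γ hab)
      rw [glue_srelP] at this
      obtain ⟨-, ⟨-, -, hr⟩ | ⟨hout, -, -⟩⟩ := this
      · simpa using hr
      · have := hab.lt_left; omega
    · rw [NC.le_iff]
      intro a b hab
      have := h _ _ (out_srelP h1 h2 τ γ hab)
      rw [glue_srelP] at this
      have ha := hab.lt_left; have hb := hab.lt_right
      obtain ⟨-, ⟨hca, hcb, hr⟩ | ⟨-, -, hr⟩⟩ := this
      · exfalso
        have hla : olift c s a < c ∨ c + s ≤ olift c s a := olift_out _ (by omega)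
        have h4 := hr.lt_left
        omega
      · rwa [oidx_olift, oidx_olift] at hr
  · rintro ⟨ht, hg⟩
    rw [NC.le_iff] at ht hg ⊢
    intro a b hab
    rw [glue_srelP] at hab ⊢
    obtain ⟨⟨ha, hb⟩, ⟨hca, hcb, hr⟩ | ⟨houta, houtb, hr⟩⟩ := hab
    · exact ⟨⟨ha, hb⟩, Or.inl ⟨hca, hcb, ht _ _ hr⟩⟩
    · exact ⟨⟨ha, hb⟩, Or.inr ⟨houta, houtb, hg _ _ hr⟩⟩

lemma le_glue_sep {c s u m : ℕ} (h1 : c ≤ u) (h2 : m = s + u)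
    {τ : NC s} {γ : NC u} {σ' : NC m} (h : σ' ≤ ncGlue c h1 h2 τ γ) :
    ∀ a b, c ≤ a → a < c + s → SRelP σ' a b → c ≤ b ∧ b < c + s := by
  intro a b hca has hr
  rw [NC.le_iff] at h
  have := h _ _ hr
  rw [glue_srelP] at this
  obtain ⟨-, ⟨-, hcb, hrr⟩ | ⟨houta, -, -⟩⟩ := this
  · have := hrr.lt_right; omega
  · omega

lemma glue_bot {c s u m : ℕ} (h1 : c ≤ u) (h2 : m = s + u) :
    ncGlue c h1 h2 (ncBot s) (ncBot u) = ncBot m := by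
  apply nc_ext
  intro a b
  rw [glue_srelP]
  constructor
  · rintro ⟨⟨ha, hb⟩, ⟨hca, hcb, hr⟩ | ⟨houta, houtb, hr⟩⟩
    · rw [srelP_bot] at hr
      rw [srelP_bot]
      omega
    · rw [srelP_bot] at hr
      rw [srelP_bot]
      obtain ⟨heq, hlt⟩ := hr
      unfold oidx at heq
      split_ifs at heq <;> omega
  · intro h
    rw [srelP_bot] at h
    obtain ⟨rfl, ha⟩ := h
    refine ⟨⟨by omega, by omega⟩, ?_⟩
    by_cases hmid : c ≤ a ∧ a < c + s
    · exact Or.inl ⟨hmid.1, hmid.1, (srelP_bot).mpr ⟨rfl, by omega⟩⟩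
    · have hout : a < c ∨ c + s ≤ a := by omega
      exact Or.inr ⟨hout, hout, (srelP_bot).mpr ⟨rfl, oidx_lt h1 h2 (by omega) hout⟩⟩

/-! ### block counts -/

lemma ncBlocks_pos {k : ℕ} (hk : 1 ≤ k) (σ : NC k) : 1 ≤ ncBlocks σ := by
  unfold ncBlocks
  have : Nonempty (Fin k) := ⟨⟨0, by omega⟩⟩
  have : Nonempty (Quotient σ.1) := Nonempty.map (Quotient.mk σ.1) this
  exact Nat.card_pos

lemma ncBlocks_le {k : ℕ} (σ : NC k) : ncBlocks σ ≤ k := by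
  unfold ncBlocks
  have h := Nat.card_le_card_of_surjective (Quotient.mk σ.1)
    (fun q => Quotient.exists_rep q)
  simpa using h

lemma ncBlocks_top {k : ℕ} (hk : 1 ≤ k) : ncBlocks (ncTop k) = 1 := by
  unfold ncBlocks
  have : Nonempty (Fin k) := ⟨⟨0, by omega⟩⟩
  have : Nonempty (Quotient (ncTop k).1) := Nonempty.map (Quotient.mk _) this
  have : Subsingleton (Quotient (ncTop k).1) := by
    constructor
    intro a b
    induction a using Quotient.ind
    induction b using Quotient.ind
    exact Quotient.sound trivial
  exact Nat.card_unique

noncomputable def glueQuotEquiv {c s u m : ℕ} (h1 : c ≤ u) (h2 : m = s + u)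
    (τ : NC s) (γ : NC u) :
    Quotient (ncGlue c h1 h2 τ γ).1 ≃ Quotient τ.1 ⊕ Quotient γ.1 := by
  classical
  refine Equiv.ofBijective (Quotient.lift (fun x : Fin m =>
    if hx : c ≤ (x : ℕ) ∧ (x : ℕ) < c + s then
      Sum.inl (⟦⟨(x : ℕ) - c, by omega⟩⟧ : Quotient τ.1)
    else Sum.inr (⟦⟨oidx c s (x : ℕ), oidx_lt h1 h2 x.2 (by omega)⟩⟧ : Quotient γ.1)) ?_) ?_
  · intro x y hxy
    rcases hxy with ⟨hca, hcb, hr⟩ | ⟨houta, houtb, hr⟩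
    · obtain ⟨ha', hb', hr⟩ := hr
      rw [dif_pos ⟨hca, by omega⟩, dif_pos ⟨hcb, by omega⟩]
      exact congrArg Sum.inl (Quotient.sound hr)
    · obtain ⟨ha', hb', hr⟩ := hr
      rw [dif_neg (by omega), dif_neg (by omega)]
      exact congrArg Sum.inr (Quotient.sound hr)
  · constructor
    · -- injective
      intro a b
      induction a using Quotient.ind with | _ x =>
      induction b using Quotient.ind with | _ y =>
      intro h
      by_cases hx : c ≤ (x : ℕ) ∧ (x : ℕ) < c + s <;>
        by_cases hy : c ≤ (y : ℕ) ∧ (y : ℕ) < c + s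
      · rw [Quotient.lift_mk, Quotient.lift_mk, dif_pos hx, dif_pos hy] at h
        have h' := Quotient.exact (Sum.inl.inj h)
        apply Quotient.sound
        exact Or.inl ⟨hx.1, hy.1, ⟨by omega, by omega, h'⟩⟩
      · rw [Quotient.lift_mk, Quotient.lift_mk, dif_pos hx, dif_neg hy] at h
        exact absurd h (by simp)
      · rw [Quotient.lift_mk, Quotient.lift_mk, dif_neg hx, dif_pos hy] at h
        exact absurd h (by simp)
      · rw [Quotient.lift_mk, Quotient.lift_mk, dif_neg hx, dif_neg hy] at h
        have h' := Quotient.exact (Sum.inr.inj h)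
        apply Quotient.sound
        exact Or.inr ⟨by omega, by omega,
          ⟨oidx_lt h1 h2 x.2 (by omega), oidx_lt h1 h2 y.2 (by omega), h'⟩⟩
    · -- surjective
      rintro (a | a)
      · induction a using Quotient.ind with | _ i =>
        refine ⟨⟦⟨c + (i : ℕ), by omega⟩⟧, ?_⟩
        rw [Quotient.lift_mk, dif_pos ⟨by simp only [Fin.val_mk]; omega,
          by simp only [Fin.val_mk]; omega⟩]
        congr 2
        exact Fin.ext (by simp only [Fin.val_mk]; omega)
      · induction a using Quotient.ind with | _ i =>
        refine ⟨⟦⟨olift c s (i : ℕ), olift_lt h1 h2 i.2⟩⟧, ?_⟩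
        have hout : olift c s (i : ℕ) < c ∨ c + s ≤ olift c s (i : ℕ) :=
          olift_out _ (by omega)
        rw [Quotient.lift_mk, dif_neg (by simp only [Fin.val_mk]; omega)]
        congr 2
        exact Fin.ext (by simpa using oidx_olift)

lemma ncBlocks_glue {c s u m : ℕ} (h1 : c ≤ u) (h2 : m = s + u)
    (τ : NC s) (γ : NC u) :
    ncBlocks (ncGlue c h1 h2 τ γ) = ncBlocks τ + ncBlocks γ := by
  unfold ncBlocks
  rw [Nat.card_congr (glueQuotEquiv h1 h2 τ γ), Nat.card_sum]

/-! ### Möbius multiplicativity over glue -/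

open scoped Classical in
lemma mu_sum_le (mu : ∀ k, NC k → NC k → ℤ) [∀ k, Fintype (NC k)]
    (hmu : ∀ k, ∀ a b : NC k, a ≤ b →
      (∑ c ∈ Finset.univ.filter (fun c => a ≤ c ∧ c ≤ b), mu k a c) =
        if a = b then 1 else 0)
    (n : ℕ) (b' : NC n) :
    (∑ c ∈ Finset.univ.filter (fun c => c ≤ b'), mu n (ncBot n) c) =
      if ncBot n = b' then 1 else 0 := by
  rw [← hmu n (ncBot n) b' (ncBot_le b')]
  apply Finset.sum_congr _ (fun _ _ => rfl)
  ext c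
  simp [ncBot_le]

lemma le_glue_components {c s u m : ℕ} (h1 : c ≤ u) (h2 : m = s + u)
    {τ : NC s} {γ : NC u} {σ' : NC m} (h : σ' ≤ ncGlue c h1 h2 τ γ) :
    ncRmid c s (by omega) σ' ≤ τ ∧ ncRout c s u h1 h2 σ' ≤ γ := by
  have hsep := le_glue_sep h1 h2 h
  have heq := glue_eq_self h1 h2 (by omega) σ' hsep
  rw [← glue_le_glue_iff h1 h2]
  rwa [heq]

open scoped Classical in
lemma glue_mu (mu : ∀ k, NC k → NC k → ℤ) [∀ k, Fintype (NC k)]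
    (hmu : ∀ k, ∀ a b : NC k, a ≤ b →
      (∑ c ∈ Finset.univ.filter (fun c => a ≤ c ∧ c ≤ b), mu k a c) =
        if a = b then 1 else 0)
    {c s u m : ℕ} (h1 : c ≤ u) (h2 : m = s + u) (τ : NC s) (γ : NC u) :
    mu m (ncBot m) (ncGlue c h1 h2 τ γ) =
      mu s (ncBot s) τ * mu u (ncBot u) γ := by
  have hcs : c + s ≤ m := by omega
  have key := mobius_unique (mu m (ncBot m))
    (fun σ' => mu s (ncBot s) (ncRmid c s hcs σ') * mu u (ncBot u) (ncRout c s u h1 h2 σ'))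
    (fun b' => if ncBot m = b' then 1 else 0) (ncGlue c h1 h2 τ γ)
    (fun b' _ => mu_sum_le mu hmu m b') ?_ (ncGlue c h1 h2 τ γ) le_rfl
  · rw [key]
    rw [rmid_glue h1 h2 hcs, rout_glue h1 h2]
  · intro b' hb'
    obtain ⟨τ', γ', rfl⟩ : ∃ τ' γ', b' = ncGlue c h1 h2 τ' γ' :=
      ⟨_, _, (glue_eq_self h1 h2 hcs b' (le_glue_sep h1 h2 hb')).symm⟩
    have hbij : (∑ σ'' ∈ Finset.univ.filter (fun σ'' => σ'' ≤ ncGlue c h1 h2 τ' γ'),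
        mu s (ncBot s) (ncRmid c s hcs σ'') * mu u (ncBot u) (ncRout c s u h1 h2 σ''))
        = ∑ p ∈ (Finset.univ.filter (fun x => x ≤ τ')) ×ˢ
            (Finset.univ.filter (fun x => x ≤ γ')),
            mu s (ncBot s) p.1 * mu u (ncBot u) p.2 := by
      apply Finset.sum_nbij' (fun σ'' => (ncRmid c s hcs σ'', ncRout c s u h1 h2 σ''))
        (fun p => ncGlue c h1 h2 p.1 p.2)
      · intro a ha
        simp only [Finset.mem_filter, Finset.mem_univ, true_and] at ha
        rw [Finset.mem_product]
        have h' := le_glue_components h1 h2 ha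
        simp only [Finset.mem_filter, Finset.mem_univ, true_and]
        exact h'
      · intro p hp
        simp only [Finset.mem_product, Finset.mem_filter, Finset.mem_univ, true_and] at hp
        simp only [Finset.mem_filter, Finset.mem_univ, true_and]
        rw [glue_le_glue_iff]
        exact hp
      · intro a ha
        simp only [Finset.mem_filter, Finset.mem_univ, true_and] at ha
        exact glue_eq_self h1 h2 hcs a (le_glue_sep h1 h2 ha)
      · intro p hp
        exact Prod.ext (by simp [rmid_glue]) (by simp [rout_glue])
      · intro a ha
        rfl
    rw [hbij, Finset.sum_product, ← Finset.sum_mul_sum,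
      mu_sum_le mu hmu s τ', mu_sum_le mu hmu u γ']
    have hiff : ncBot m = ncGlue c h1 h2 τ' γ' ↔ (ncBot s = τ' ∧ ncBot u = γ') := by
      constructor
      · intro h
        have h' : ncGlue c h1 h2 (ncBot s) (ncBot u) = ncGlue c h1 h2 τ' γ' := by
          rw [glue_bot]; exact h
        constructor
        · have := congrArg (ncRmid c s hcs) h'
          rwa [rmid_glue h1 h2 hcs, rmid_glue h1 h2 hcs] at this
        · have := congrArg (ncRout c s u h1 h2) h'
          rwa [rout_glue h1 h2, rout_glue h1 h2] at this
      · rintro ⟨ha, hb⟩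
        rw [← ha, ← hb, glue_bot]
    split_ifs with hA hB hC <;> simp_all

/-! ### weighted sums -/

open Polynomial
open scoped Classical

noncomputable def Ap (mu : ∀ k, NC k → NC k → ℤ) [∀ k, Fintype (NC k)] (k : ℕ) :
    Polynomial ℤ :=
  ∑ σ : NC k, C (mu k (ncBot k) σ) * X ^ (ncBlocks σ)

def lastCond (r m : ℕ) (σ : NC m) : Prop :=
  ∀ a b : ℕ, m - r ≤ a → a < m → m - r ≤ b → b < m → SRelP σ a b

noncomputable def Dp (mu : ∀ k, NC k → NC k → ℤ) [∀ k, Fintype (NC k)] (r m : ℕ) :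
    Polynomial ℤ :=
  ∑ σ ∈ Finset.univ.filter (lastCond r m), C (mu m (ncBot m) σ) * X ^ (ncBlocks σ)

lemma Dp_one (mu : ∀ k, NC k → NC k → ℤ) [∀ k, Fintype (NC k)] (m : ℕ) :
    Dp mu 1 m = Ap mu m := by
  unfold Dp Ap
  rw [Finset.filter_true_of_mem]
  intro σ _
  intro a b ha ha' hb hb'
  have : a = b := by omega
  subst this
  exact srelP_refl σ ha'

lemma nc_zero_eq (σ : NC 0) : σ = ncBot 0 := by
  apply nc_ext
  intro a b
  constructor
  · rintro ⟨ha, -, -⟩; omega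
  · rw [srelP_bot]; omega

lemma nc_one_eq (σ : NC 1) : σ = ncBot 1 := by
  apply nc_ext
  intro a b
  rw [srelP_bot]
  constructor
  · rintro ⟨ha, hb, -⟩; omega
  · rintro ⟨rfl, h⟩; exact srelP_refl σ h

instance ncUniqueZero : Unique (NC 0) := ⟨⟨ncBot 0⟩, fun σ => nc_zero_eq σ⟩

instance ncUniqueOne : Unique (NC 1) := ⟨⟨ncBot 1⟩, fun σ => nc_one_eq σ⟩

lemma mu_bot_bot (mu : ∀ k, NC k → NC k → ℤ) [∀ k, Fintype (NC k)]
    (hmu : ∀ k, ∀ a b : NC k, a ≤ b →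
      (∑ c ∈ Finset.univ.filter (fun c => a ≤ c ∧ c ≤ b), mu k a c) =
        if a = b then 1 else 0)
    (n : ℕ) : mu n (ncBot n) (ncBot n) = 1 := by
  have h := mu_sum_le mu hmu n (ncBot n)
  rw [if_pos rfl] at h
  rw [← h]
  have : Finset.univ.filter (fun c => c ≤ ncBot n) = {ncBot n} := by
    ext c
    simp only [Finset.mem_filter, Finset.mem_univ, true_and, Finset.mem_singleton]
    constructor
    · intro h'; exact le_antisymm h' (ncBot_le c)
    · rintro rfl; exact le_rfl
  rw [this, Finset.sum_singleton]

lemma ncBlocks_bot (n : ℕ) : ncBlocks (ncBot n) = n := by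
  unfold ncBlocks
  have : Quotient (ncBot n).1 ≃ Fin n := by
    refine Equiv.ofBijective (Quotient.lift (fun x : Fin n => x) ?_) ⟨?_, ?_⟩
    · intro a b hab
      exact Fin.ext (by simpa [ncBot] using congrArg Fin.val hab)
    · intro a b
      induction a using Quotient.ind with | _ x =>
      induction b using Quotient.ind with | _ y =>
      intro h
      exact Quotient.sound (show x = y by simpa using h)
    · intro x; exact ⟨⟦x⟧, rfl⟩
  rw [Nat.card_congr this]
  simp

lemma Ap_zero (mu : ∀ k, NC k → NC k → ℤ) [∀ k, Fintype (NC k)]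
    (hmu : ∀ k, ∀ a b : NC k, a ≤ b →
      (∑ c ∈ Finset.univ.filter (fun c => a ≤ c ∧ c ≤ b), mu k a c) =
        if a = b then 1 else 0) : Ap mu 0 = 1 := by
  unfold Ap
  rw [Finset.univ_unique, Finset.sum_singleton]
  have h0 : (default : NC 0) = ncBot 0 := rfl
  rw [h0, mu_bot_bot mu hmu, ncBlocks_bot]
  simp

lemma Ap_one (mu : ∀ k, NC k → NC k → ℤ) [∀ k, Fintype (NC k)]
    (hmu : ∀ k, ∀ a b : NC k, a ≤ b →
      (∑ c ∈ Finset.univ.filter (fun c => a ≤ c ∧ c ≤ b), mu k a c) =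
        if a = b then 1 else 0) : Ap mu 1 = X := by
  unfold Ap
  rw [Finset.univ_unique, Finset.sum_singleton]
  have h0 : (default : NC 1) = ncBot 1 := rfl
  rw [h0, mu_bot_bot mu hmu, ncBlocks_bot]
  simp

lemma ncBot_ne_top {n : ℕ} (hn : 2 ≤ n) : ncBot n ≠ ncTop n := by
  intro h
  have h1 : SRelP (ncBot n) 0 1 := by
    rw [h, srelP_top]; omega
  rw [srelP_bot] at h1
  omega

lemma Ap_eval_one (mu : ∀ k, NC k → NC k → ℤ) [∀ k, Fintype (NC k)]
    (hmu : ∀ k, ∀ a b : NC k, a ≤ b →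
      (∑ c ∈ Finset.univ.filter (fun c => a ≤ c ∧ c ≤ b), mu k a c) =
        if a = b then 1 else 0)
    (n : ℕ) (hn : 2 ≤ n) : (Ap mu n).eval 1 = 0 := by
  unfold Ap
  rw [Polynomial.eval_finset_sum]
  have h := mu_sum_le mu hmu n (ncTop n)
  rw [if_neg (ncBot_ne_top hn)] at h
  rw [← h]
  rw [Finset.filter_true_of_mem (fun c _ => le_ncTop c)]
  apply Finset.sum_congr rfl
  intro σ _
  simp

/-! ### the hierarchy recurrence -/

noncomputable def Jfun (L m : ℕ) (σ : NC m) : ℕ :=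
  ((Finset.range L).filter (fun a => SRelP σ a (m - 1))).sup (· + 1)

lemma Jfun_ge {L m : ℕ} (σ : NC m) {a : ℕ} (ha : a < L) (hrel : SRelP σ a (m - 1)) :
    a + 1 ≤ Jfun L m σ :=
  Finset.le_sup (f := (· + 1)) (by simp [Finset.mem_filter, Finset.mem_range, ha, hrel])

lemma Jfun_le {L m : ℕ} (σ : NC m) : Jfun L m σ ≤ L := by
  apply Finset.sup_le
  intro a ha
  simp only [Finset.mem_filter, Finset.mem_range] at ha
  omega

lemma Jfun_spec {L m : ℕ} (σ : NC m) (h0 : Jfun L m σ ≠ 0) :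
    Jfun L m σ - 1 < L ∧ SRelP σ (Jfun L m σ - 1) (m - 1) := by
  have hne : ((Finset.range L).filter (fun a => SRelP σ a (m - 1))).Nonempty := by
    rw [Finset.nonempty_iff_ne_empty]
    intro he
    unfold Jfun at h0
    rw [he] at h0
    simp at h0
  obtain ⟨a, ha, heq⟩ := Finset.exists_mem_eq_sup _ hne (· + 1)
  simp only [Finset.mem_filter, Finset.mem_range] at ha
  unfold Jfun at h0 ⊢
  rw [heq]
  constructor
  · omega
  · simpa using ha.2

lemma S_step (mu : ∀ k, NC k → NC k → ℤ) [∀ k, Fintype (NC k)]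
    (hmu : ∀ k, ∀ a b : NC k, a ≤ b →
      (∑ c ∈ Finset.univ.filter (fun c => a ≤ c ∧ c ≤ b), mu k a c) =
        if a = b then 1 else 0)
    (r m : ℕ) (hr : 1 ≤ r) (hrm : r ≤ m) :
    Dp mu r m = C (mu r (ncBot r) (ncTop r)) * X * Ap mu (m - r) +
      ∑ j ∈ Finset.Ico 1 (m - r + 1), Ap mu (m - r - j) * Dp mu (r + 1) (j + r) := by
  have hsplit := Finset.sum_filter_add_sum_filter_not
    (Finset.univ.filter (lastCond r m)) (fun σ => Jfun (m - r) m σ = 0)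
    (fun σ => C (mu m (ncBot m) σ) * X ^ (ncBlocks σ))
  rw [Dp, ← hsplit]
  congr 1
  · -- PART A : no low connection
    have h2 : m = r + (m - r) := by omega
    have hA : C (mu r (ncBot r) (ncTop r)) * X * Ap mu (m - r) =
        ∑ γ : NC (m - r), C (mu r (ncBot r) (ncTop r)) * C (mu (m - r) (ncBot (m - r)) γ) *
          X ^ (ncBlocks γ + 1) := by
      unfold Ap
      rw [Finset.mul_sum]
      apply Finset.sum_congr rfl
      intros
      ring
    rw [hA]
    have hdecomp : ∀ σ ∈ (Finset.univ.filter (lastCond r m)).filter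
        (fun σ => Jfun (m - r) m σ = 0),
        ncGlue (m - r) le_rfl h2 (ncTop r) (ncRout (m - r) r (m - r) le_rfl h2 σ) = σ := by
      intro σ hσ
      simp only [Finset.mem_filter, Finset.mem_univ, true_and] at hσ
      obtain ⟨hcond, hJ0⟩ := hσ
      have hsep : ∀ a b, m - r ≤ a → a < (m - r) + r → SRelP σ a b →
          m - r ≤ b ∧ b < (m - r) + r := by
        intro a b ha ha' hab
        have hbm := hab.lt_right
        refine ⟨?_, by omega⟩
        by_contra hb
        push_neg at hb
        have h1' : SRelP σ a (m - 1) := hcond a (m - 1) (by omega) (by omega) (by omega) (by omega)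
        have h2' : SRelP σ b (m - 1) := (hab.symm).trans h1'
        have := Jfun_ge σ (by omega : b < m - r) h2'
        omega
      have hmid : ncRmid (m - r) r (by omega) σ = ncTop r := by
        apply nc_ext
        intro a b
        rw [rmid_srelP, srelP_top]
        constructor
        · rintro ⟨ha, hb, -⟩; exact ⟨ha, hb⟩
        · rintro ⟨ha, hb⟩
          exact ⟨ha, hb, hcond _ _ (by omega) (by omega) (by omega) (by omega)⟩
      calc ncGlue (m - r) le_rfl h2 (ncTop r) (ncRout (m - r) r (m - r) le_rfl h2 σ)
          = ncGlue (m - r) le_rfl h2 (ncRmid (m - r) r (by omega) σ)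
            (ncRout (m - r) r (m - r) le_rfl h2 σ) := by rw [hmid]
        _ = σ := glue_eq_self le_rfl h2 (by omega) σ hsep
    apply Finset.sum_nbij' (fun σ => ncRout (m - r) r (m - r) le_rfl h2 σ)
      (fun γ => ncGlue (m - r) le_rfl h2 (ncTop r) γ)
    · intro a _
      exact Finset.mem_univ _
    · intro γ _
      simp only [Finset.mem_filter, Finset.mem_univ, true_and]
      constructor
      · -- lastCond
        intro a b ha ha' hb hb'
        have hrel : SRelP (ncTop r) (a - (m - r)) (b - (m - r)) := by
          rw [srelP_top]; omega
        have := mid_srelP le_rfl h2 (ncTop r) γ hrel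
        have e1 : (m - r) + (a - (m - r)) = a := by omega
        have e2 : (m - r) + (b - (m - r)) = b := by omega
        rwa [e1, e2] at this
      · -- Jfun = 0
        have hempty : (Finset.range (m - r)).filter
            (fun a => SRelP (ncGlue (m - r) le_rfl h2 (ncTop r) γ) a (m - 1)) = ∅ := by
          rw [Finset.filter_eq_empty_iff]
          intro a ha hrel
          rw [Finset.mem_range] at ha
          rw [glue_srelP] at hrel
          obtain ⟨-, ⟨hca, -, -⟩ | ⟨-, houtb, -⟩⟩ := hrel
          · omega
          · omega
        unfold Jfun
        rw [hempty]
        simp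
    · exact hdecomp
    · intro γ _
      exact rout_glue le_rfl h2 (ncTop r) γ
    · intro σ hσ
      conv_lhs => rw [← hdecomp σ hσ]
      rw [glue_mu mu hmu le_rfl h2, ncBlocks_glue le_rfl h2, ncBlocks_top hr, map_mul]
      ring
  · -- PART B : fibered by Jfun
    rw [← Finset.sum_fiberwise_of_maps_to (g := fun σ => Jfun (m - r) m σ)
      (t := Finset.Ico 1 (m - r + 1)) ?_ (fun σ => C (mu m (ncBot m) σ) * X ^ (ncBlocks σ))]
    swap
    · intro σ hσ
      simp only [Finset.mem_filter, Finset.mem_univ, true_and] at hσ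
      rw [Finset.mem_Ico]
      obtain ⟨-, h0⟩ := hσ
      have := Jfun_le (L := m - r) σ
      change 1 ≤ Jfun (m - r) m σ ∧ Jfun (m - r) m σ < m - r + 1
      omega
    apply Finset.sum_congr rfl
    intro j hj
    rw [Finset.mem_Ico] at hj
    obtain ⟨hj1, hj2⟩ := hj
    have hjL : j ≤ m - r := by omega
    have h1 : j ≤ j + r := by omega
    have h2 : m = (m - r - j) + (j + r) := by omega
    -- the fiber set
    set Fib := ((Finset.univ.filter (lastCond r m)).filter
      (fun σ => ¬Jfun (m - r) m σ = 0)).filter (fun σ => Jfun (m - r) m σ = j) with hFib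
    have hmemFib : ∀ σ ∈ Fib, lastCond r m σ ∧ Jfun (m - r) m σ = j := by
      intro σ hσ
      rw [hFib] at hσ
      simp only [Finset.mem_filter, Finset.mem_univ, true_and] at hσ
      exact ⟨hσ.1.1, hσ.2⟩
    have hdecomp : ∀ σ ∈ Fib,
        ncGlue j h1 h2 (ncRmid j (m - r - j) (by omega) σ)
          (ncRout j (m - r - j) (j + r) h1 h2 σ) = σ := by
      intro σ hσ
      obtain ⟨hcond, hJj⟩ := hmemFib σ hσ
      have hJspec := Jfun_spec (L := m - r) σ (by omega)
      rw [hJj] at hJspec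
      obtain ⟨-, hj1rel⟩ := hJspec
      have hnot : ∀ a', j ≤ a' → a' < m - r → ¬SRelP σ a' (m - 1) := by
        intro a' h1' h2' hrel
        have := Jfun_ge σ h2' hrel
        omega
      apply glue_eq_self
      intro a b ha ha' hab
      have hbm := hab.lt_right
      have haL : a < m - r := by omega
      have hrelam : ¬SRelP σ a (m - 1) := hnot a ha haL
      by_contra hb
      push_neg at hb
      have hbrange : b < j ∨ m - r ≤ b := by omega
      rcases hbrange with hb' | hb'
      · -- b below j
        rcases Nat.lt_or_ge b (j - 1) with hb'' | hb''
        · have hba : SRelP σ b (j - 1) :=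
            nc_noncross σ hb'' (by omega) (by omega) hab.symm hj1rel
          exact hrelam ((hab.trans hba).trans hj1rel)
        · have hbj : b = j - 1 := by omega
          subst hbj
          exact hrelam (hab.trans hj1rel)
      · -- b at least m - r
        have h2' : SRelP σ b (m - 1) :=
          hcond b (m - 1) (by omega) (by omega) (by omega) (by omega)
        exact hrelam (hab.trans h2')
    have hB : Ap mu (m - r - j) * Dp mu (r + 1) (j + r) =
        ∑ p ∈ (Finset.univ : Finset (NC (m - r - j))) ×ˢ
          (Finset.univ.filter (lastCond (r + 1) (j + r))),
          (C (mu (m - r - j) (ncBot (m - r - j)) p.1) * X ^ (ncBlocks p.1)) *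
          (C (mu (j + r) (ncBot (j + r)) p.2) * X ^ (ncBlocks p.2)) := by
      rw [Ap, Dp, Finset.sum_mul_sum, ← Finset.sum_product']
    rw [hB]
    apply Finset.sum_nbij'
      (fun σ => (ncRmid j (m - r - j) (by omega) σ, ncRout j (m - r - j) (j + r) h1 h2 σ))
      (fun p => ncGlue j h1 h2 p.1 p.2)
    · -- forward membership
      intro σ hσ
      obtain ⟨hcond, hJj⟩ := hmemFib σ hσ
      have hJspec := Jfun_spec (L := m - r) σ (by omega)
      rw [hJj] at hJspec
      obtain ⟨-, hj1rel⟩ := hJspec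
      rw [Finset.mem_product]
      refine ⟨Finset.mem_univ _, ?_⟩
      simp only [Finset.mem_filter, Finset.mem_univ, true_and]
      intro a b ha ha' hb hb'
      have hja : j + r - (r + 1) = j - 1 := by omega
      rw [hja] at ha hb
      have hlift : ∀ a', j - 1 ≤ a' → a' < j + r →
          SRelP σ (olift j (m - r - j) a') (m - 1) := by
        intro a' hal hau
        rcases Nat.lt_or_ge a' j with hc | hc
        · have : a' = j - 1 := by omega
          subst this
          have : olift j (m - r - j) (j - 1) = j - 1 := by
            unfold olift; rw [if_pos (by omega)]
          rw [this]
          exact hj1rel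
        · have : olift j (m - r - j) a' = a' + (m - r - j) := by
            unfold olift; rw [if_neg (by omega)]
          rw [this]
          exact hcond _ _ (by omega) (by omega) (by omega) (by omega)
      rw [rout_srelP]
      exact ⟨by omega, by omega, (hlift a ha ha').trans ((hlift b hb hb').symm)⟩
    · -- backward membership
      rintro ⟨τ, γ⟩ hp
      rw [Finset.mem_product] at hp
      simp only [Finset.mem_filter, Finset.mem_univ, true_and] at hp
      have hγ := hp
      have hja : j + r - (r + 1) = j - 1 := by omega
      have houtrel : ∀ a b, j - 1 ≤ a → a < j + r → j - 1 ≤ b → b < j + r →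
          SRelP (ncGlue j h1 h2 τ γ) (olift j (m - r - j) a) (olift j (m - r - j) b) := by
        intro a b ha ha' hb hb'
        exact out_srelP h1 h2 τ γ (hγ a b (by omega) (by omega) (by omega) (by omega))
      have holift_hi : ∀ a, m - r ≤ a → a < m → olift j (m - r - j) (a - (m - r - j)) = a := by
        intro a ha ha'
        unfold olift
        rw [if_neg (by omega)]
        omega
      have holift_lo : olift j (m - r - j) (j - 1) = j - 1 := by
        unfold olift; rw [if_pos (by omega)]
      rw [hFib]
      simp only [Finset.mem_filter, Finset.mem_univ, true_and]
      have hcondg : lastCond r m (ncGlue j h1 h2 τ γ) := by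
        intro a b ha ha' hb hb'
        have := houtrel (a - (m - r - j)) (b - (m - r - j))
          (by omega) (by omega) (by omega) (by omega)
        rwa [holift_hi a ha ha', holift_hi b hb hb'] at this
      have hJj : Jfun (m - r) m (ncGlue j h1 h2 τ γ) = j := by
        apply le_antisymm
        · apply Finset.sup_le
          intro a ha
          simp only [Finset.mem_filter, Finset.mem_range] at ha
          obtain ⟨haL, harel⟩ := ha
          rw [glue_srelP] at harel
          obtain ⟨-, ⟨-, hcb, hrr⟩ | ⟨houta, -, -⟩⟩ := harel
          · have := hrr.lt_right; omega
          · omega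
        · have hrel : SRelP (ncGlue j h1 h2 τ γ) (j - 1) (m - 1) := by
            have := houtrel (j - 1) (j + r - 1) (by omega) (by omega) (by omega) (by omega)
            rw [holift_lo] at this
            have e : olift j (m - r - j) (j + r - 1) = m - 1 := by
              unfold olift; rw [if_neg (by omega)]; omega
            rwa [e] at this
          have := Jfun_ge (L := m - r) _ (by omega) hrel
          omega
      exact ⟨⟨hcondg, by omega⟩, hJj⟩
    · exact hdecomp
    · rintro ⟨τ, γ⟩ _
      exact Prod.ext (by simp [rmid_glue]) (by simp [rout_glue])
    · intro σ hσ
      conv_lhs => rw [← hdecomp σ hσ]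
      rw [glue_mu mu hmu h1 h2, ncBlocks_glue h1 h2, map_mul]
      ring

/-! ### power series composition (bespoke) -/

section PComp
open PowerSeries
variable {R : Type*} [CommRing R]

noncomputable def pcomp (u f : PowerSeries R) : PowerSeries R :=
  PowerSeries.mk fun n => ∑ k ∈ Finset.range (n + 1), (coeff k u) * (coeff n (f ^ k))

lemma coeff_pow_zero {f : PowerSeries R} (hf : constantCoeff f = 0) {n k : ℕ}
    (h : n < k) : coeff n (f ^ k) = 0 := by
  obtain ⟨g, hg⟩ := PowerSeries.X_dvd_iff.mpr hf
  rw [hg, mul_pow, mul_comm, PowerSeries.coeff_mul_X_pow', if_neg (by omega)]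

lemma coeff_mul_congr {a a' b b' : PowerSeries R} {n : ℕ}
    (ha : ∀ i ≤ n, coeff i a = coeff i a') (hb : ∀ i ≤ n, coeff i b = coeff i b') :
    coeff n (a * b) = coeff n (a' * b') := by
  rw [PowerSeries.coeff_mul, PowerSeries.coeff_mul]
  apply Finset.sum_congr rfl
  intro p hp
  rw [Finset.HasAntidiagonal.mem_antidiagonal] at hp
  rw [ha p.1 (by omega), hb p.2 (by omega)]

lemma coeff_pcomp {u f : PowerSeries R} {n : ℕ} :
    coeff n (pcomp u f) = ∑ k ∈ Finset.range (n + 1), (coeff k u) * (coeff n (f ^ k)) := by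
  rw [pcomp, PowerSeries.coeff_mk]

/-- master agreement lemma -/
lemma coeff_eval₂ {u f : PowerSeries R} (hf : constantCoeff f = 0)
    {p : Polynomial R} {n : ℕ} (hp : ∀ k ≤ n, p.coeff k = coeff k u) :
    coeff n (Polynomial.eval₂ (PowerSeries.C) f p) = coeff n (pcomp u f) := by
  rw [coeff_pcomp, Polynomial.eval₂_eq_sum, Polynomial.sum, map_sum]
  simp only [PowerSeries.coeff_C_mul]
  have e1 : ∑ k ∈ p.support, p.coeff k * coeff n (f ^ k) =
      ∑ k ∈ p.support ∪ Finset.range (n + 1), p.coeff k * coeff n (f ^ k) :=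
    Finset.sum_subset Finset.subset_union_left
      (fun k _ hk => by rw [Polynomial.notMem_support_iff.mp hk, zero_mul])
  have e2 : ∑ k ∈ Finset.range (n + 1), coeff k u * coeff n (f ^ k) =
      ∑ k ∈ p.support ∪ Finset.range (n + 1), coeff k u * coeff n (f ^ k) :=
    Finset.sum_subset Finset.subset_union_right
      (fun k _ hk => by
        rw [coeff_pow_zero hf (by rw [Finset.mem_range] at hk; omega), mul_zero])
  rw [e1, e2]
  apply Finset.sum_congr rfl
  intro k _
  by_cases hkn : k ≤ n
  · rw [hp k hkn]
  · rw [coeff_pow_zero hf (by omega), mul_zero, mul_zero]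

lemma trunc_coeff_agree (u : PowerSeries R) (n : ℕ) :
    ∀ k ≤ n, (PowerSeries.trunc (n + 1) u).coeff k = coeff k u := by
  intro k hk
  rw [PowerSeries.coeff_trunc, if_pos (by omega)]

lemma coeff_pcomp_eval (hf : PowerSeries.constantCoeff f = 0) (u : PowerSeries R) (n : ℕ) :
    coeff n (pcomp u f) =
      coeff n (Polynomial.eval₂ (PowerSeries.C) f (PowerSeries.trunc (n + 1) u)) :=
  (coeff_eval₂ hf (trunc_coeff_agree u n)).symm

lemma pcomp_add {u v f : PowerSeries R} : pcomp (u + v) f = pcomp u f + pcomp v f := by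
  ext n
  rw [map_add, coeff_pcomp, coeff_pcomp, coeff_pcomp, ← Finset.sum_add_distrib]
  apply Finset.sum_congr rfl
  intro k _
  rw [map_add, add_mul]

lemma pcomp_mul {u v f : PowerSeries R} (hf : constantCoeff f = 0) :
    pcomp (u * v) f = pcomp u f * pcomp v f := by
  ext n
  have hprod : ∀ k ≤ n,
      (PowerSeries.trunc (n + 1) u * PowerSeries.trunc (n + 1) v).coeff k =
        coeff k (u * v) := by
    intro k hk
    rw [Polynomial.coeff_mul, PowerSeries.coeff_mul]
    apply Finset.sum_congr rfl
    intro p hp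
    rw [Finset.HasAntidiagonal.mem_antidiagonal] at hp
    rw [trunc_coeff_agree u n p.1 (by omega), trunc_coeff_agree v n p.2 (by omega)]
  calc coeff n (pcomp (u * v) f)
      = coeff n (Polynomial.eval₂ (PowerSeries.C) f
          (PowerSeries.trunc (n + 1) u * PowerSeries.trunc (n + 1) v)) :=
        (coeff_eval₂ hf hprod).symm
    _ = coeff n (Polynomial.eval₂ (PowerSeries.C) f (PowerSeries.trunc (n + 1) u) *
          Polynomial.eval₂ (PowerSeries.C) f (PowerSeries.trunc (n + 1) v)) := by
        rw [Polynomial.eval₂_mul]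
    _ = coeff n (pcomp u f * pcomp v f) :=
        coeff_mul_congr
          (fun i hi => coeff_eval₂ hf (fun k hk => trunc_coeff_agree u n k (by omega)))
          (fun i hi => coeff_eval₂ hf (fun k hk => trunc_coeff_agree v n k (by omega)))

lemma pcomp_C {a : R} {f : PowerSeries R} :
    pcomp (PowerSeries.C a) f = PowerSeries.C a := by
  ext n
  have hs := Finset.sum_eq_single_of_mem (s := Finset.range (n + 1))
    (f := fun k => coeff k (PowerSeries.C a) * coeff n (f ^ k)) 0
    (Finset.mem_range.mpr (by omega))
    (fun k _ hk => by rw [PowerSeries.coeff_C, if_neg hk, zero_mul])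
  rw [coeff_pcomp, hs]
  rw [pow_zero]
  rcases n with - | n <;> simp

lemma pcomp_X {f : PowerSeries R} (hf : constantCoeff f = 0) :
    pcomp PowerSeries.X f = f := by
  ext n
  rw [coeff_pcomp]
  rcases n with - | n
  · rw [Finset.range_one, Finset.sum_singleton, pow_zero]
    have h0 : coeff 0 (PowerSeries.X : PowerSeries R) = 0 := by
      rw [PowerSeries.coeff_zero_eq_constantCoeff]
      exact PowerSeries.constantCoeff_X
    rw [h0, zero_mul, PowerSeries.coeff_zero_eq_constantCoeff, hf]
  · have hs := Finset.sum_eq_single_of_mem (s := Finset.range (n + 2))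
      (f := fun k => coeff k (PowerSeries.X : PowerSeries R) * coeff (n + 1) (f ^ k)) 1
      (Finset.mem_range.mpr (by omega))
      (fun k _ hk => by rw [PowerSeries.coeff_X, if_neg hk, zero_mul])
    rw [hs]
    rw [PowerSeries.coeff_X, if_pos rfl, one_mul, pow_one]

lemma pcomp_map {S : Type*} [CommRing S] (φ : R →+* S) {u f : PowerSeries R} :
    PowerSeries.map φ (pcomp u f) = pcomp (PowerSeries.map φ u) (PowerSeries.map φ f) := by
  ext n
  rw [PowerSeries.coeff_map, coeff_pcomp, coeff_pcomp, map_sum]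
  apply Finset.sum_congr rfl
  intro k _
  rw [map_mul, ← PowerSeries.coeff_map, ← PowerSeries.coeff_map, map_pow]

lemma coeff_Xsq_pow (n : ℕ) :
    coeff n ((PowerSeries.X + PowerSeries.X ^ 2 : PowerSeries R) ^ n) = 1 := by
  have h : (PowerSeries.X + PowerSeries.X ^ 2 : PowerSeries R) =
      (1 + PowerSeries.X) * PowerSeries.X ^ 1 := by ring
  rw [h, mul_pow, ← pow_mul, one_mul, PowerSeries.coeff_mul_X_pow', if_pos (le_refl n)]
  simp only [Nat.sub_self]
  rw [PowerSeries.coeff_zero_eq_constantCoeff, map_pow]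
  simp

lemma pcomp_Xsq_cancel {a b : PowerSeries R}
    (h : pcomp a (PowerSeries.X + PowerSeries.X ^ 2) =
      pcomp b (PowerSeries.X + PowerSeries.X ^ 2)) : a = b := by
  ext n
  induction n using Nat.strong_induction_on with
  | _ n IH =>
  have hc := congrArg (PowerSeries.coeff n) h
  rw [coeff_pcomp, coeff_pcomp, Finset.sum_range_succ, Finset.sum_range_succ] at hc
  have he : ∑ k ∈ Finset.range n,
        coeff k a * PowerSeries.coeff n ((PowerSeries.X + PowerSeries.X ^ 2) ^ k)
      = ∑ k ∈ Finset.range n,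
        coeff k b * PowerSeries.coeff n ((PowerSeries.X + PowerSeries.X ^ 2) ^ k) := by
    apply Finset.sum_congr rfl
    intro k hk
    rw [Finset.mem_range] at hk
    rw [IH k hk]
  rw [he, coeff_Xsq_pow] at hc
  simpa using hc

end PComp


/-! ### assembly -/

section Assembly
variable (mu : ∀ k, NC k → NC k → ℤ) [∀ k, Fintype (NC k)]

noncomputable def Bser : PowerSeries (Polynomial ℤ) := PowerSeries.mk (Ap mu)

noncomputable def Phiser : PowerSeries (Polynomial ℤ) :=
  PowerSeries.mk (fun n => if n = 0 then 0 else Ap mu n)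

noncomputable def Dser (r : ℕ) : PowerSeries (Polynomial ℤ) :=
  PowerSeries.mk (fun m => if r ≤ m then Dp mu r m else 0)

noncomputable def cser (r : ℕ) : PowerSeries (Polynomial ℤ) :=
  PowerSeries.C (Polynomial.C (mu r (ncBot r) (ncTop r)) * Polynomial.X) * PowerSeries.X ^ r

noncomputable def user : PowerSeries ℤ :=
  PowerSeries.mk (fun r => if r = 0 then 0 else mu r (ncBot r) (ncTop r))

noncomputable def vser : PowerSeries (Polynomial ℤ) :=
  PowerSeries.map (Polynomial.C : ℤ →+* Polynomial ℤ) (user mu)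

noncomputable def wser : PowerSeries (Polynomial ℤ) := PowerSeries.X * Bser mu

lemma coeff_cser (r k : ℕ) : PowerSeries.coeff k (cser mu r) =
    if k = r then Polynomial.C (mu r (ncBot r) (ncTop r)) * Polynomial.X else 0 := by
  rw [cser, PowerSeries.coeff_C_mul, PowerSeries.coeff_X_pow]
  split_ifs <;> simp

lemma Dser_step
    (hmu : ∀ k, ∀ a b : NC k, a ≤ b →
      (∑ c ∈ Finset.univ.filter (fun c => a ≤ c ∧ c ≤ b), mu k a c) =
        if a = b then 1 else 0)
    (r : ℕ) (hr : 1 ≤ r) :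
    Dser mu r = Bser mu * (cser mu r + Dser mu (r + 1)) := by
  refine PowerSeries.ext fun m => ?_
  rw [Dser, PowerSeries.coeff_mk, PowerSeries.coeff_mul]
  rw [Finset.Nat.sum_antidiagonal_eq_sum_range_succ
    (fun a b => PowerSeries.coeff a (Bser mu) * PowerSeries.coeff b (cser mu r + Dser mu (r + 1)))]
  have hBco : ∀ a, PowerSeries.coeff a (Bser mu) = Ap mu a := fun a => PowerSeries.coeff_mk _ _
  have hDco : ∀ a, PowerSeries.coeff a (Dser mu (r + 1)) =
      if r + 1 ≤ a then Dp mu (r + 1) a else 0 := fun a => PowerSeries.coeff_mk _ _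
  by_cases hm : r ≤ m
  · rw [if_pos hm, S_step mu hmu r m hr hm]
    have hterm : ∀ k, PowerSeries.coeff k (Bser mu) *
        PowerSeries.coeff (m - k) (cser mu r + Dser mu (r + 1)) =
        Ap mu k * (if m - k = r then Polynomial.C (mu r (ncBot r) (ncTop r)) * Polynomial.X else 0)
        + Ap mu k * (if r + 1 ≤ m - k then Dp mu (r + 1) (m - k) else 0) := by
      intro k
      rw [map_add, hBco, coeff_cser, hDco, mul_add]
    simp only [hterm]
    rw [Finset.sum_add_distrib]
    have hA : ∑ k ∈ Finset.range (m + 1), Ap mu k *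
        (if m - k = r then Polynomial.C (mu r (ncBot r) (ncTop r)) * Polynomial.X else 0) =
        Polynomial.C (mu r (ncBot r) (ncTop r)) * Polynomial.X * Ap mu (m - r) := by
      rw [Finset.sum_eq_single_of_mem (m - r) (Finset.mem_range.mpr (by omega))]
      · rw [if_pos (by omega)]
        ring
      · intro k hk hkne
        rw [Finset.mem_range] at hk
        rw [if_neg (by omega), mul_zero]
    have hB : ∑ k ∈ Finset.range (m + 1), Ap mu k *
        (if r + 1 ≤ m - k then Dp mu (r + 1) (m - k) else 0) =
        ∑ j ∈ Finset.Ico 1 (m - r + 1), Ap mu (m - r - j) * Dp mu (r + 1) (j + r) := by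
      have e1 : ∀ k, Ap mu k * (if r + 1 ≤ m - k then Dp mu (r + 1) (m - k) else 0)
          = if r + 1 ≤ m - k then Ap mu k * Dp mu (r + 1) (m - k) else 0 := by
        intro k; split_ifs <;> simp
      simp only [e1]
      rw [← Finset.sum_filter]
      apply Finset.sum_nbij' (fun k => m - k - r) (fun j => m - r - j)
      · intro k hk
        simp only [Finset.mem_filter, Finset.mem_range] at hk
        rw [Finset.mem_Ico]
        omega
      · intro j hj
        rw [Finset.mem_Ico] at hj
        simp only [Finset.mem_filter, Finset.mem_range]
        omega
      · intro k hk
        simp only [Finset.mem_filter, Finset.mem_range] at hk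
        omega
      · intro j hj
        rw [Finset.mem_Ico] at hj
        omega
      · intro k hk
        simp only [Finset.mem_filter, Finset.mem_range] at hk
        have e2 : m - r - (m - k - r) = k := by omega
        have e3 : m - k - r + r = m - k := by omega
        rw [e2, e3]
    simp only [Nat.succ_eq_add_one] at *
    rw [hA, hB]
  · rw [if_neg hm]
    symm
    apply Finset.sum_eq_zero
    intro k hk
    rw [Finset.mem_range] at hk
    rw [map_add, coeff_cser, hDco, if_neg (by omega), if_neg (by omega)]
    simp

lemma Bser_eq
    (hmu : ∀ k, ∀ a b : NC k, a ≤ b →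
      (∑ c ∈ Finset.univ.filter (fun c => a ≤ c ∧ c ≤ b), mu k a c) =
        if a = b then 1 else 0) :
    Bser mu = 1 + Phiser mu := by
  refine PowerSeries.ext fun n => ?_
  rw [Bser, PowerSeries.coeff_mk, map_add, Phiser, PowerSeries.coeff_mk,
    PowerSeries.coeff_one]
  rcases n with - | n
  · rw [Ap_zero mu hmu]; simp
  · simp

lemma Phiser_eq_Dser_one : Phiser mu = Dser mu 1 := by
  refine PowerSeries.ext fun n => ?_
  rw [Phiser, Dser, PowerSeries.coeff_mk, PowerSeries.coeff_mk]
  rcases n with - | n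
  · simp
  · rw [if_neg (by omega), if_pos (by omega), Dp_one]

lemma unroll
    (hmu : ∀ k, ∀ a b : NC k, a ≤ b →
      (∑ c ∈ Finset.univ.filter (fun c => a ≤ c ∧ c ≤ b), mu k a c) =
        if a = b then 1 else 0) :
    ∀ N : ℕ, Dser mu 1 = (∑ r ∈ Finset.Icc 1 N, Bser mu ^ r * cser mu r) +
      Bser mu ^ N * Dser mu (N + 1) := by
  intro N
  induction N with
  | zero =>
    rw [Finset.Icc_eq_empty (by omega), Finset.sum_empty, pow_zero, one_mul, zero_add]
  | succ N IH =>
    rw [IH, Dser_step mu hmu (N + 1) (by omega), Finset.sum_Icc_succ_top (by omega)]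
    ring

lemma coeff_tail_zero (n : ℕ) :
    PowerSeries.coeff n (Bser mu ^ n * Dser mu (n + 1)) = 0 := by
  rw [PowerSeries.coeff_mul]
  apply Finset.sum_eq_zero
  intro p hp
  rw [Finset.HasAntidiagonal.mem_antidiagonal] at hp
  have : PowerSeries.coeff p.2 (Dser mu (n + 1)) = 0 := by
    rw [Dser, PowerSeries.coeff_mk, if_neg (by omega)]
  rw [this, mul_zero]

lemma main_comp
    (hmu : ∀ k, ∀ a b : NC k, a ≤ b →
      (∑ c ∈ Finset.univ.filter (fun c => a ≤ c ∧ c ≤ b), mu k a c) =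
        if a = b then 1 else 0) :
    Phiser mu = PowerSeries.C Polynomial.X * pcomp (vser mu) (wser mu) := by
  refine PowerSeries.ext fun n => ?_
  have hv : ∀ k, PowerSeries.coeff k (vser mu) =
      if k = 0 then 0 else Polynomial.C (mu k (ncBot k) (ncTop k)) := by
    intro k
    rw [vser, PowerSeries.coeff_map, user, PowerSeries.coeff_mk, apply_ite Polynomial.C, map_zero]
  have hw : ∀ k n : ℕ, PowerSeries.coeff n (wser mu ^ k) =
      if k ≤ n then PowerSeries.coeff (n - k) (Bser mu ^ k) else 0 := by
    intro k n
    rw [wser, mul_pow, mul_comm, PowerSeries.coeff_mul_X_pow']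
  rw [PowerSeries.coeff_C_mul, coeff_pcomp]
  rcases n with - | n
  · rw [Phiser, PowerSeries.coeff_mk, if_pos rfl]
    rw [Finset.range_one, Finset.sum_singleton, hv, if_pos rfl, zero_mul, mul_zero]
  · rw [Phiser_eq_Dser_one, unroll mu hmu (n + 1), map_add, coeff_tail_zero, add_zero, map_sum]
    have hL : ∀ r, 1 ≤ r → r ≤ n + 1 →
        PowerSeries.coeff (n + 1) (Bser mu ^ r * cser mu r) =
        (Polynomial.C (mu r (ncBot r) (ncTop r)) * Polynomial.X) *
          PowerSeries.coeff (n + 1 - r) (Bser mu ^ r) := by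
      intro r h1 h2
      have : Bser mu ^ r * cser mu r =
          PowerSeries.C (Polynomial.C (mu r (ncBot r) (ncTop r)) * Polynomial.X) *
            (Bser mu ^ r * PowerSeries.X ^ r) := by
        rw [cser]; ring
      rw [this, PowerSeries.coeff_C_mul, PowerSeries.coeff_mul_X_pow', if_pos (by omega)]
    have hR : ∀ k, PowerSeries.coeff k (vser mu) * PowerSeries.coeff (n + 1) (wser mu ^ k)
        = if k = 0 then 0 else
          (if k ≤ n + 1 then Polynomial.C (mu k (ncBot k) (ncTop k)) *
            PowerSeries.coeff (n + 1 - k) (Bser mu ^ k) else 0) := by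
      intro k
      rw [hv, hw]
      split_ifs <;> simp
    rw [Finset.mul_sum]
    simp only [hR]
    rw [Finset.range_eq_Ico, Finset.sum_eq_sum_Ico_succ_bot (by omega : 0 < n + 2)]
    rw [if_pos rfl, mul_zero, zero_add]
    rw [show Finset.Ico 1 (n + 2) = Finset.Icc 1 (n + 1) from Finset.Ico_add_one_right_eq_Icc 1 (n + 1)]
    apply Finset.sum_congr rfl
    intro r hr
    rw [Finset.mem_Icc] at hr
    rw [hL r hr.1 hr.2, if_neg (by omega), if_pos (by omega)]
    ring

end Assembly

section Assembly2
variable (mu : ∀ k, NC k → NC k → ℤ) [∀ k, Fintype (NC k)]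

lemma Pe_Phiser
    (hmu : ∀ k, ∀ a b : NC k, a ≤ b →
      (∑ c ∈ Finset.univ.filter (fun c => a ≤ c ∧ c ≤ b), mu k a c) =
        if a = b then 1 else 0) :
    PowerSeries.map (Polynomial.evalRingHom (1 : ℤ)) (Phiser mu) = PowerSeries.X := by
  refine PowerSeries.ext fun n => ?_
  rw [PowerSeries.coeff_map, Phiser, PowerSeries.coeff_mk, PowerSeries.coeff_X]
  match n with
  | 0 => simp
  | 1 => rw [if_neg (by omega), if_pos rfl, Ap_one mu hmu]; simp
  | (n + 2) =>
    rw [if_neg (by omega), if_neg (by omega)]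
    exact Ap_eval_one mu hmu (n + 2) (by omega)

lemma Pe_Bser
    (hmu : ∀ k, ∀ a b : NC k, a ≤ b →
      (∑ c ∈ Finset.univ.filter (fun c => a ≤ c ∧ c ≤ b), mu k a c) =
        if a = b then 1 else 0) :
    PowerSeries.map (Polynomial.evalRingHom (1 : ℤ)) (Bser mu) = 1 + PowerSeries.X := by
  refine PowerSeries.ext fun n => ?_
  rw [PowerSeries.coeff_map, Bser, PowerSeries.coeff_mk, map_add, PowerSeries.coeff_one,
    PowerSeries.coeff_X]
  match n with
  | 0 => rw [Ap_zero mu hmu]; simp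
  | 1 => rw [Ap_one mu hmu]; simp
  | (n + 2) =>
    rw [if_neg (by omega), if_neg (by omega)]
    show (Ap mu (n + 2)).eval 1 = 0 + 0
    rw [Ap_eval_one mu hmu (n + 2) (by omega)]
    simp

lemma Pe_vser : PowerSeries.map (Polynomial.evalRingHom (1 : ℤ)) (vser mu) = user mu := by
  refine PowerSeries.ext fun n => ?_
  rw [PowerSeries.coeff_map, vser, PowerSeries.coeff_map]
  simp

lemma user_eq
    (hmu : ∀ k, ∀ a b : NC k, a ≤ b →
      (∑ c ∈ Finset.univ.filter (fun c => a ≤ c ∧ c ≤ b), mu k a c) =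
        if a = b then 1 else 0) :
    user mu + user mu ^ 2 = PowerSeries.X := by
  have hf0 : PowerSeries.constantCoeff (R := ℤ) (PowerSeries.X + PowerSeries.X ^ 2) = 0 := by
    simp
  have hXcomp : pcomp (user mu) (PowerSeries.X + PowerSeries.X ^ 2) = PowerSeries.X := by
    have h1 := congrArg (PowerSeries.map (Polynomial.evalRingHom (1 : ℤ))) (main_comp mu hmu)
    rw [Pe_Phiser mu hmu, map_mul, pcomp_map, Pe_vser] at h1
    have h2 : PowerSeries.map (Polynomial.evalRingHom (1 : ℤ)) (wser mu)
        = PowerSeries.X + PowerSeries.X ^ 2 := by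
      rw [wser, map_mul, PowerSeries.map_X, Pe_Bser mu hmu]
      ring
    have h3 : PowerSeries.map (Polynomial.evalRingHom (1 : ℤ))
        (PowerSeries.C Polynomial.X) = 1 := by
      rw [PowerSeries.map_C]
      simp
    rw [h2, h3, one_mul] at h1
    exact h1.symm
  apply pcomp_Xsq_cancel (R := ℤ)
  rw [pcomp_add, pow_two (user mu), pcomp_mul hf0, hXcomp, pcomp_X hf0]
  ring

lemma vser_eq
    (hmu : ∀ k, ∀ a b : NC k, a ≤ b →
      (∑ c ∈ Finset.univ.filter (fun c => a ≤ c ∧ c ≤ b), mu k a c) =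
        if a = b then 1 else 0) :
    vser mu + vser mu ^ 2 = PowerSeries.X := by
  have := congrArg (PowerSeries.map (Polynomial.C : ℤ →+* Polynomial ℤ)) (user_eq mu hmu)
  rw [map_add, map_pow, PowerSeries.map_X] at this
  exact this

lemma wser_const : PowerSeries.constantCoeff (R := Polynomial ℤ) (wser mu) = 0 := by
  rw [wser, map_mul]
  simp

lemma Y_quad
    (hmu : ∀ k, ∀ a b : NC k, a ≤ b →
      (∑ c ∈ Finset.univ.filter (fun c => a ≤ c ∧ c ≤ b), mu k a c) =
        if a = b then 1 else 0) :
    pcomp (vser mu) (wser mu) + (pcomp (vser mu) (wser mu)) ^ 2 = wser mu := by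
  have h := wser_const mu
  calc pcomp (vser mu) (wser mu) + (pcomp (vser mu) (wser mu)) ^ 2
      = pcomp (vser mu + vser mu ^ 2) (wser mu) := by
        rw [pcomp_add, pow_two, pow_two, pcomp_mul h]
    _ = pcomp PowerSeries.X (wser mu) := by rw [vser_eq mu hmu]
    _ = wser mu := pcomp_X h

lemma coeff_Y_zero : PowerSeries.coeff 0 (pcomp (vser mu) (wser mu)) = 0 := by
  rw [coeff_pcomp, Finset.range_one, Finset.sum_singleton, vser, PowerSeries.coeff_map,
    user, PowerSeries.coeff_mk]
  simp

lemma X_mul_coeff_Y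
    (hmu : ∀ k, ∀ a b : NC k, a ≤ b →
      (∑ c ∈ Finset.univ.filter (fun c => a ≤ c ∧ c ≤ b), mu k a c) =
        if a = b then 1 else 0) (k : ℕ) (hk : 1 ≤ k) :
    Polynomial.X * PowerSeries.coeff k (pcomp (vser mu) (wser mu)) = Ap mu k := by
  have h := congrArg (PowerSeries.coeff k) (main_comp mu hmu)
  rw [PowerSeries.coeff_C_mul, Phiser, PowerSeries.coeff_mk, if_neg (by omega)] at h
  exact h.symm

end Assembly2


open scoped Classical in
open Polynomial in
/-- The characteristic polynomials of the non-crossing partition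
lattices satisfy χ(NC_1,t) = 1 and, for n ≥ 2,
χ(NC_n,t) = t·χ(NC_{n−1},t) − Σ_{i=1}^{n−1} χ(NC_i,t)·χ(NC_{n−i},t). -/
theorem ncChi_recurrence (mu : ∀ k, NC k → NC k → ℤ) [∀ k, Fintype (NC k)]
    (hmu : ∀ k, ∀ a b : NC k, a ≤ b →
      (∑ c ∈ Finset.univ.filter (fun c => a ≤ c ∧ c ≤ b), mu k a c) =
        if a = b then 1 else 0)
    (n : ℕ) (hn : 2 ≤ n) :
    ncChi mu 1 = 1 ∧
      ncChi mu n = X * ncChi mu (n - 1) -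
        ∑ i ∈ Finset.Ico 1 n, ncChi mu i * ncChi mu (n - i) := by
  have hXchi : ∀ k, 1 ≤ k → Polynomial.X * ncChi mu k = Ap mu k := by
    intro k hk
    rw [ncChi, Ap, Finset.mul_sum]
    apply Finset.sum_congr rfl
    intro p _
    have h1 := ncBlocks_pos hk p
    have h2 := ncBlocks_le p
    have he : (k - 1) - (k - ncBlocks p) + 1 = ncBlocks p := by omega
    calc Polynomial.X * (C (mu k (ncBot k) p) * X ^ ((k - 1) - (k - ncBlocks p)))
        = C (mu k (ncBot k) p) * X ^ ((k - 1) - (k - ncBlocks p) + 1) := by ring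
      _ = C (mu k (ncBot k) p) * X ^ (ncBlocks p) := by rw [he]
  have hchi : ∀ k, 1 ≤ k →
      ncChi mu k = PowerSeries.coeff k (pcomp (vser mu) (wser mu)) := by
    intro k hk
    apply mul_left_cancel₀ (Polynomial.X_ne_zero (R := ℤ))
    rw [hXchi k hk, X_mul_coeff_Y mu hmu k hk]
  have hone : ncChi mu 1 = 1 := by
    apply mul_left_cancel₀ (Polynomial.X_ne_zero (R := ℤ))
    rw [hXchi 1 le_rfl, Ap_one mu hmu, mul_one]
  refine ⟨hone, ?_⟩
  obtain ⟨n', rfl⟩ : ∃ n', n = n' + 1 := ⟨n - 1, by omega⟩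
  have hq := congrArg (PowerSeries.coeff (n' + 1)) (Y_quad mu hmu)
  rw [map_add] at hq
  have hwc : PowerSeries.coeff (n' + 1) (wser mu) = Ap mu n' := by
    rw [wser, PowerSeries.coeff_succ_X_mul, Bser, PowerSeries.coeff_mk]
  have hsq : PowerSeries.coeff (n' + 1) ((pcomp (vser mu) (wser mu)) ^ 2) =
      ∑ i ∈ Finset.Ico 1 (n' + 1), ncChi mu i * ncChi mu (n' + 1 - i) := by
    rw [pow_two, PowerSeries.coeff_mul]
    rw [Finset.Nat.sum_antidiagonal_eq_sum_range_succ
      (fun a b => PowerSeries.coeff a (pcomp (vser mu) (wser mu)) *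
        PowerSeries.coeff b (pcomp (vser mu) (wser mu)))]
    rw [Finset.sum_range_succ]
    rw [Nat.sub_self, coeff_Y_zero, mul_zero, add_zero]
    rw [Finset.range_eq_Ico, Finset.sum_eq_sum_Ico_succ_bot (by omega : 0 < n' + 1)]
    rw [coeff_Y_zero, zero_mul, zero_add]
    apply Finset.sum_congr rfl
    intro i hi
    rw [Finset.mem_Ico] at hi
    rw [← hchi i (by omega), ← hchi (n' + 1 - i) (by omega)]
  rw [hwc, hsq] at hq
  have hfin : PowerSeries.coeff (n' + 1) (pcomp (vser mu) (wser mu)) =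
      Ap mu n' - ∑ i ∈ Finset.Ico 1 (n' + 1), ncChi mu i * ncChi mu (n' + 1 - i) :=
    eq_sub_of_add_eq hq
  rw [hchi (n' + 1) (by omega), hfin, Nat.add_sub_cancel]
  rw [← hXchi n' (by omega)]
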